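/- arXiv:2106.10527 — 3 statements merged into one kernel-verified Lean document; each statement's English description precedes it below -/
import Mathlib

section
/- Let H₁ ∈ ℍ^{n×n}, H₂ ∈ ℍ^{m×m} be invertible Hermitian and X, Y : ℍⁿ → ℍᵐ quaternion-linear maps. If Y^[*] Y = X^[*] X and Ker X = Ker Y, then there exists an injective linear map U : Im X → Im Y with Y = U X and [Uu, Uv]₂ = [u,v]₂ for all u, v ∈ Im X. -/
open Quaternion Matrix

/-- The indefinite inner product `[x,y] = y* H x`. -/
noncomputable def qform {m : ℕ} (H : Matrix (Fin m) (Fin m) ℍ[ℝ]) (x y : Fin m → ℍ[ℝ]) : ℍ[ℝ] :=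
  star y ⬝ᵥ (H *ᵥ x)

theorem stmt9 {n m : ℕ} (H₁ K₁ : Matrix (Fin n) (Fin n) ℍ[ℝ])
    (H₂ : Matrix (Fin m) (Fin m) ℍ[ℝ])
    (hH₁ : H₁.IsHermitian) (hK₁ : H₁ * K₁ = 1) (hK₁' : K₁ * H₁ = 1)
    (hH₂ : H₂.IsHermitian) (hH₂inv : ∃ K₂, H₂ * K₂ = 1 ∧ K₂ * H₂ = 1)
    (X Y : Matrix (Fin m) (Fin n) ℍ[ℝ])
    (heq : K₁ * Yᴴ * H₂ * Y = K₁ * Xᴴ * H₂ * X)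
    (hker : ∀ v : Fin n → ℍ[ℝ], X *ᵥ v = 0 ↔ Y *ᵥ v = 0) :
    ∃ U : (Fin m → ℍ[ℝ]) → (Fin m → ℍ[ℝ]),
      (∀ u ∈ Set.range X.mulVec, U u ∈ Set.range Y.mulVec) ∧
      (∀ u ∈ Set.range X.mulVec, ∀ v ∈ Set.range X.mulVec, U (u + v) = U u + U v) ∧
      (∀ u ∈ Set.range X.mulVec, ∀ α : ℍ[ℝ],
        U (fun i => u i * α) = fun i => U u i * α) ∧
      (∀ u ∈ Set.range X.mulVec, ∀ v ∈ Set.range X.mulVec, U u = U v → u = v) ∧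
      (∀ u ∈ Set.range X.mulVec, ∀ v ∈ Set.range X.mulVec,
        qform H₂ (U u) (U v) = qform H₂ u v) ∧
      (∀ x : Fin n → ℍ[ℝ], Y *ᵥ x = U (X *ᵥ x)) := by
  classical
  have heq' : Yᴴ * H₂ * Y = Xᴴ * H₂ * X := by
    have h := congrArg (fun M => H₁ * M) heq
    simpa only [← Matrix.mul_assoc, hK₁, Matrix.one_mul] using h
  have hkey : ∀ a b : Fin n → ℍ[ℝ], X *ᵥ a = X *ᵥ b → Y *ᵥ a = Y *ᵥ b := by
    intro a b h
    have h0 : X *ᵥ (a - b) = 0 := by rw [Matrix.mulVec_sub, h, sub_self]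
    have h1 := (hker _).mp h0
    rw [Matrix.mulVec_sub] at h1
    exact sub_eq_zero.mp h1
  have hq : ∀ a b : Fin n → ℍ[ℝ],
      qform H₂ (Y *ᵥ a) (Y *ᵥ b) = qform H₂ (X *ᵥ a) (X *ᵥ b) := by
    intro a b
    simp only [qform, Matrix.star_mulVec, Matrix.mulVec_mulVec,
      Matrix.dotProduct_mulVec, Matrix.vecMul_vecMul]
    rw [show Yᴴ * (H₂ * Y) = Xᴴ * (H₂ * X) by
      rw [← Matrix.mul_assoc, heq', Matrix.mul_assoc]]
  set U : (Fin m → ℍ[ℝ]) → (Fin m → ℍ[ℝ]) := fun u =>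
    if h : u ∈ Set.range X.mulVec then Y *ᵥ h.choose else 0 with hUdef
  have hU : ∀ a : Fin n → ℍ[ℝ], U (X *ᵥ a) = Y *ᵥ a := by
    intro a
    have hmem : X *ᵥ a ∈ Set.range X.mulVec := ⟨a, rfl⟩
    rw [hUdef]
    simp only [dif_pos hmem]
    exact hkey _ _ hmem.choose_spec
  refine ⟨U, ?_, ?_, ?_, ?_, ?_, ?_⟩
  · rintro u ⟨a, rfl⟩
    exact ⟨a, (hU a).symm⟩
  · rintro u ⟨a, rfl⟩ v ⟨b, rfl⟩
    rw [← Matrix.mulVec_add, hU, hU, hU, Matrix.mulVec_add]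
  · rintro u ⟨a, rfl⟩ α
    have h1 : (fun i => (X *ᵥ a) i * α) = X *ᵥ (fun j => a j * α) := by
      funext i
      simp [Matrix.mulVec, dotProduct, Finset.sum_mul, mul_assoc]
    have h2 : (fun i => (Y *ᵥ a) i * α) = Y *ᵥ (fun j => a j * α) := by
      funext i
      simp [Matrix.mulVec, dotProduct, Finset.sum_mul, mul_assoc]
    rw [h1, hU, hU, h2]
  · rintro u ⟨a, rfl⟩ v ⟨b, rfl⟩ h
    rw [hU, hU] at h
    have h0 : Y *ᵥ (a - b) = 0 := by rw [Matrix.mulVec_sub, h, sub_self]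
    have h1 := (hker (a - b)).mpr h0
    rw [Matrix.mulVec_sub] at h1
    exact sub_eq_zero.mp h1
  · rintro u ⟨a, rfl⟩ v ⟨b, rfl⟩
    rw [hU, hU]
    exact hq a b
  · intro x
    exact (hU x).symm
end

section
/- In the block description of Witt extensions: given invertible Hermitian Gramian matrix G = [[0,0,I,0],[0,J₁,0,0],[I,0,0,0],[0,0,0,J₂]] (block sizes m₀, m−m₀, m₀, n−m−m₀, with J₁, J₂ diagonal ±1 matrices), a block matrix Ũ = [[I,0,A₁,A₂],[0,I,A₃,A₄],[0,0,A₅,A₆],[0,0,A₇,A₈]] over ℍ satisfies Ũ* G Ũ = G if and only if A₅ = I, A₃ = A₄ = A₆ = 0, A₈* J₂ A₈ = J₂, A₂ = −A₇* J₂ A₈, and A₁ + A₁* = −A₇* J₂ A₇. -/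
open Quaternion Matrix

theorem stmt15 {n m m₀ : ℕ} (hm : m₀ ≤ m) (hn : m ≤ n)
    (J₁ : Matrix (Fin (m - m₀)) (Fin (m - m₀)) ℍ[ℝ])
    (J₂ : Matrix (Fin (n - m - m₀)) (Fin (n - m - m₀)) ℍ[ℝ])
    (hJ₁diag : ∀ i j, i ≠ j → J₁ i j = 0)
    (hJ₁pm : ∀ i, J₁ i i = 1 ∨ J₁ i i = -1)
    (hJ₂diag : ∀ i j, i ≠ j → J₂ i j = 0)
    (hJ₂pm : ∀ i, J₂ i i = 1 ∨ J₂ i i = -1)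
    (A₁ : Matrix (Fin m₀) (Fin m₀) ℍ[ℝ])
    (A₂ : Matrix (Fin m₀) (Fin (n - m - m₀)) ℍ[ℝ])
    (A₃ : Matrix (Fin (m - m₀)) (Fin m₀) ℍ[ℝ])
    (A₄ : Matrix (Fin (m - m₀)) (Fin (n - m - m₀)) ℍ[ℝ])
    (A₅ : Matrix (Fin m₀) (Fin m₀) ℍ[ℝ])
    (A₆ : Matrix (Fin m₀) (Fin (n - m - m₀)) ℍ[ℝ])
    (A₇ : Matrix (Fin (n - m - m₀)) (Fin m₀) ℍ[ℝ])
    (A₈ : Matrix (Fin (n - m - m₀)) (Fin (n - m - m₀)) ℍ[ℝ])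
    (G : Matrix ((Fin m₀ ⊕ Fin (m - m₀)) ⊕ (Fin m₀ ⊕ Fin (n - m - m₀)))
        ((Fin m₀ ⊕ Fin (m - m₀)) ⊕ (Fin m₀ ⊕ Fin (n - m - m₀))) ℍ[ℝ])
    (hG : G = fromBlocks (fromBlocks 0 0 0 J₁) (fromBlocks 1 0 0 0)
        (fromBlocks 1 0 0 0) (fromBlocks 0 0 0 J₂))
    (U : Matrix ((Fin m₀ ⊕ Fin (m - m₀)) ⊕ (Fin m₀ ⊕ Fin (n - m - m₀)))
        ((Fin m₀ ⊕ Fin (m - m₀)) ⊕ (Fin m₀ ⊕ Fin (n - m - m₀))) ℍ[ℝ])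
    (hU : U = fromBlocks 1 (fromBlocks A₁ A₂ A₃ A₄) 0 (fromBlocks A₅ A₆ A₇ A₈)) :
    Uᴴ * G * U = G ↔
      (A₅ = 1 ∧ A₃ = 0 ∧ A₄ = 0 ∧ A₆ = 0 ∧
        A₈ᴴ * J₂ * A₈ = J₂ ∧ A₂ = -(A₇ᴴ * J₂ * A₈) ∧
        A₁ + A₁ᴴ = -(A₇ᴴ * J₂ * A₇)) := by
  have hd1 : J₁ = Matrix.diagonal (fun i => J₁ i i) := Matrix.ext fun i j => by
    by_cases h : i = j
    · subst h; simp
    · simp [Matrix.diagonal_apply_ne _ h, hJ₁diag i j h]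
  have hd2 : J₂ = Matrix.diagonal (fun i => J₂ i i) := Matrix.ext fun i j => by
    by_cases h : i = j
    · subst h; simp
    · simp [Matrix.diagonal_apply_ne _ h, hJ₂diag i j h]
  have hJ1h : J₁ᴴ = J₁ := by
    have hs : (star fun i => J₁ i i) = (fun i => J₁ i i) := funext fun i => by
      rcases hJ₁pm i with h | h <;> simp [Pi.star_apply, h]
    conv_lhs => rw [hd1]
    rw [Matrix.diagonal_conjTranspose, hs, ← hd1]
  have hJ2h : J₂ᴴ = J₂ := by
    have hs : (star fun i => J₂ i i) = (fun i => J₂ i i) := funext fun i => by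
      rcases hJ₂pm i with h | h <;> simp [Pi.star_apply, h]
    conv_lhs => rw [hd2]
    rw [Matrix.diagonal_conjTranspose, hs, ← hd2]
  have hJ1sq : J₁ * J₁ = 1 := by
    have hs : (fun i => J₁ i i * J₁ i i) = (fun _ => (1 : ℍ[ℝ])) := funext fun i => by
      rcases hJ₁pm i with h | h <;> simp [h]
    conv_lhs => rw [hd1]
    rw [Matrix.diagonal_mul_diagonal, hs, Matrix.diagonal_one]
  subst hG hU
  simp only [fromBlocks_conjTranspose, fromBlocks_multiply, conjTranspose_zero,
    conjTranspose_one, hJ1h, hJ2h, Matrix.mul_zero, Matrix.zero_mul, Matrix.mul_one,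
    Matrix.one_mul, add_zero, zero_add, fromBlocks_add, Matrix.add_mul, Matrix.mul_add, fromBlocks_inj, true_and]
  constructor
  · rintro ⟨⟨h5, h6, h3, h4⟩, -, e11, e12, -, e22⟩
    have h3' : A₃ = 0 := by
      have := congrArg (fun M => J₁ * M) h3
      simpa [← Matrix.mul_assoc, hJ1sq] using this
    have h4' : A₄ = 0 := by
      have := congrArg (fun M => J₁ * M) h4
      simpa [← Matrix.mul_assoc, hJ1sq] using this
    subst h5 h6 h3' h4'
    simp only [Matrix.conjTranspose_one, Matrix.conjTranspose_zero, Matrix.one_mul,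
      Matrix.mul_one, Matrix.zero_mul, Matrix.mul_zero, add_zero, zero_add] at e11 e12 e22
    refine ⟨rfl, rfl, rfl, rfl, e22, ?_, ?_⟩
    · exact eq_neg_of_add_eq_zero_left e12
    · exact eq_neg_of_add_eq_zero_left (by rw [add_assoc]; exact e11)
  · rintro ⟨h5, h3, h4, h6, h8, h2, h1⟩
    subst h5 h3 h4 h6 h2
    refine ⟨⟨rfl, rfl, by simp, by simp⟩, ⟨by simp, by simp, by simp, by simp⟩, ?_, ?_, ?_, ?_⟩
    · simp only [Matrix.conjTranspose_one, Matrix.conjTranspose_zero, Matrix.one_mul,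
        Matrix.mul_one, Matrix.zero_mul, Matrix.mul_zero, add_zero, zero_add]
      rw [← add_assoc, h1, neg_add_cancel]
    · simp
    · simp [Matrix.conjTranspose_mul, hJ2h, Matrix.mul_assoc]
    · simp [h8]
end

section
/- Every quaternion matrix Ũ of the form [[I, 0, −(1/2)P₂* J₂ P₂ + P₃, −P₂* J₂ P₁],[0, I, 0, 0],[0, 0, I, 0],[0, 0, P₂, P₁]] with P₁ J₂-unitary (P₁* J₂ P₁ = J₂), P₂ arbitrary of size (n−m−m₀)×m₀, and P₃ skew-Hermitian m₀×m₀ (P₃* = −P₃), satisfies Ũ* G Ũ = G for G = [[0,0,I,0],[0,J₁,0,0],[I,0,0,0],[0,0,0,J₂]]. -/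
open Quaternion Matrix

theorem stmt16 {n m m₀ : ℕ} (hm : m₀ ≤ m) (hn : m ≤ n)
    (J₁ : Matrix (Fin (m - m₀)) (Fin (m - m₀)) ℍ[ℝ])
    (J₂ : Matrix (Fin (n - m - m₀)) (Fin (n - m - m₀)) ℍ[ℝ])
    (hJ₁diag : ∀ i j, i ≠ j → J₁ i j = 0)
    (hJ₁pm : ∀ i, J₁ i i = 1 ∨ J₁ i i = -1)
    (hJ₂diag : ∀ i j, i ≠ j → J₂ i j = 0)
    (hJ₂pm : ∀ i, J₂ i i = 1 ∨ J₂ i i = -1)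
    (P₁ : Matrix (Fin (n - m - m₀)) (Fin (n - m - m₀)) ℍ[ℝ])
    (hP₁ : P₁ᴴ * J₂ * P₁ = J₂)
    (P₂ : Matrix (Fin (n - m - m₀)) (Fin m₀) ℍ[ℝ])
    (P₃ : Matrix (Fin m₀) (Fin m₀) ℍ[ℝ]) (hP₃ : P₃ᴴ = -P₃)
    (G : Matrix ((Fin m₀ ⊕ Fin (m - m₀)) ⊕ (Fin m₀ ⊕ Fin (n - m - m₀)))
        ((Fin m₀ ⊕ Fin (m - m₀)) ⊕ (Fin m₀ ⊕ Fin (n - m - m₀))) ℍ[ℝ])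
    (hG : G = fromBlocks (fromBlocks 0 0 0 J₁) (fromBlocks 1 0 0 0)
        (fromBlocks 1 0 0 0) (fromBlocks 0 0 0 J₂))
    (U : Matrix ((Fin m₀ ⊕ Fin (m - m₀)) ⊕ (Fin m₀ ⊕ Fin (n - m - m₀)))
        ((Fin m₀ ⊕ Fin (m - m₀)) ⊕ (Fin m₀ ⊕ Fin (n - m - m₀))) ℍ[ℝ])
    (hU : U = fromBlocks 1
        (fromBlocks (-((2 : ℍ[ℝ])⁻¹ • (P₂ᴴ * J₂ * P₂)) + P₃) (-(P₂ᴴ * J₂ * P₁)) 0 0)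
        0 (fromBlocks 1 0 P₂ P₁)) :
    Uᴴ * G * U = G := by
  have hJ₂H : J₂ᴴ = J₂ := by
    apply Matrix.ext
    intro i j
    rw [conjTranspose_apply]
    by_cases h : i = j
    · subst h
      rcases hJ₂pm i with h | h <;> simp [h]
    · simp [hJ₂diag _ _ h, hJ₂diag _ _ (Ne.symm h)]
  have hcoe2 : ((2 : ℝ) : ℍ[ℝ]) = 2 := by exact_mod_cast rfl
  have h2inv : ((2 : ℍ[ℝ])⁻¹) = (((2⁻¹ : ℝ)) : ℍ[ℝ]) := by
    have := Quaternion.coe_inv (2 : ℝ)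
    rw [hcoe2] at this
    exact this.symm
  have h2ne : (2 : ℍ[ℝ]) ≠ 0 := by
    rw [← hcoe2]
    simp only [ne_eq, ← Quaternion.coe_zero, Quaternion.coe_inj]
    norm_num
  have h2 : ∀ (S : Matrix (Fin m₀) (Fin m₀) ℍ[ℝ]),
      (2 : ℍ[ℝ])⁻¹ • S + (2 : ℍ[ℝ])⁻¹ • S = S := by
    intro S
    rw [← add_smul, show ((2:ℍ[ℝ])⁻¹ + 2⁻¹) = 1 by
      rw [← two_mul, mul_inv_cancel₀ h2ne], one_smul]
  have hSH : (P₂ᴴ * (J₂ * P₂))ᴴ = P₂ᴴ * (J₂ * P₂) := by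
    simp [conjTranspose_mul, hJ₂H, Matrix.mul_assoc]
  have hsmulH : ((2 : ℍ[ℝ])⁻¹ • (P₂ᴴ * (J₂ * P₂)))ᴴ = (2 : ℍ[ℝ])⁻¹ • (P₂ᴴ * (J₂ * P₂)) := by
    conv_rhs => rw [← hSH]
    apply Matrix.ext
    intro i j
    rw [conjTranspose_apply, Matrix.smul_apply, Matrix.smul_apply, conjTranspose_apply,
      smul_eq_mul, smul_eq_mul, StarMul.star_mul, h2inv, Quaternion.star_coe,
      Quaternion.coe_commutes]
  subst hG hU
  simp only [fromBlocks_conjTranspose, conjTranspose_neg,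
    conjTranspose_mul, conjTranspose_conjTranspose,
    conjTranspose_one, conjTranspose_zero, fromBlocks_multiply, hJ₂H, hP₃,
    Matrix.mul_one, Matrix.one_mul, Matrix.mul_zero, Matrix.zero_mul,
    add_zero, zero_add, Matrix.mul_assoc, conjTranspose_add, fromBlocks_add,
    Matrix.add_mul, Matrix.neg_mul, neg_neg, hsmulH]
  have e11 : -((2 : ℍ[ℝ])⁻¹ • (P₂ᴴ * (J₂ * P₂))) + P₃ +
      (-((2 : ℍ[ℝ])⁻¹ • (P₂ᴴ * (J₂ * P₂))) + -P₃ + P₂ᴴ * (J₂ * P₂)) = 0 := by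
    nth_rw 3 [← h2 (P₂ᴴ * (J₂ * P₂))]
    abel
  have e12 : -(P₂ᴴ * (J₂ * P₁)) + P₂ᴴ * (J₂ * P₁) = 0 := neg_add_cancel _
  have e21 : -(P₁ᴴ * (J₂ * P₂)) + P₁ᴴ * (J₂ * P₂) = 0 := neg_add_cancel _
  have e22 : P₁ᴴ * (J₂ * P₁) = J₂ := by rw [← Matrix.mul_assoc]; exact hP₁
  rw [e11, e12, e21, e22]
end
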